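/- Let A ∈ ℝ^{p×k}, and suppose Q₁ ∈ ℝ^{p×k}, Q₂ ∈ ℝ^{k×k}, and R ∈ ℝ^{k×k} satisfy A = Q₁·R, I_k = Q₂·R, and Q₁ᵀQ₁ + Q₂ᵀQ₂ = I_k (i.e. the stacked matrix [A; I_k] ∈ ℝ^{(p+k)×k} has the thin QR factorization [Q₁; Q₂]·R with [Q₁; Q₂] having orthonormal columns). Then R is invertible, I_k + AᵀA is invertible, and Q₂·Q₂ᵀ = (I_k + AᵀA)⁻¹. -/

import Mathlib

open scoped Matrix

/-- Block-QR identity underlying the QDWH iteration: if the stacked matrix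
`[A; I_k]` has a thin QR factorization `[Q₁; Q₂] R` (i.e. `A = Q₁ R`, `I = Q₂ R`, and
`Q₁ᵀ Q₁ + Q₂ᵀ Q₂ = I`), then `R` and `I + Aᵀ A` are invertible and
`Q₂ Q₂ᵀ = (I + Aᵀ A)⁻¹`. -/
theorem stmt16 {p k : ℕ}
    (A : Matrix (Fin p) (Fin k) ℝ)
    (Q₁ : Matrix (Fin p) (Fin k) ℝ) (Q₂ R : Matrix (Fin k) (Fin k) ℝ)
    (hA : A = Q₁ * R) (hI : (1 : Matrix (Fin k) (Fin k) ℝ) = Q₂ * R)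
    (horth : Q₁ᵀ * Q₁ + Q₂ᵀ * Q₂ = 1) :
    IsUnit R ∧ IsUnit (1 + Aᵀ * A) ∧ Q₂ * Q₂ᵀ = (1 + Aᵀ * A)⁻¹ := by
  have hRunit : IsUnit R := by
    rw [Matrix.isUnit_iff_isUnit_det]
    exact IsUnit.of_mul_eq_one_right _ (by rw [← Matrix.det_mul, ← hI, Matrix.det_one])
  have hRT : IsUnit Rᵀ := by
    rw [Matrix.isUnit_iff_isUnit_det, Matrix.det_transpose,
      ← Matrix.isUnit_iff_isUnit_det]
    exact hRunit
  have h1 : Rᵀ * (Q₂ᵀ * Q₂) * R = 1 := by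
    have : (Q₂ * R)ᵀ * (Q₂ * R) = 1 := by rw [← hI]; simp
    rw [Matrix.transpose_mul] at this
    rw [← this]; noncomm_ring
  have h2 : Aᵀ * A = Rᵀ * (Q₁ᵀ * Q₁) * R := by
    rw [hA, Matrix.transpose_mul]; simp only [Matrix.mul_assoc]
  have hkey : (1 : Matrix (Fin k) (Fin k) ℝ) + Aᵀ * A = Rᵀ * R := by
    rw [← h1, h2]
    have : Rᵀ * (Q₂ᵀ * Q₂) * R + Rᵀ * (Q₁ᵀ * Q₁) * R
        = Rᵀ * (Q₁ᵀ * Q₁ + Q₂ᵀ * Q₂) * R := by noncomm_ring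
    rw [this, horth]; simp
  refine ⟨hRunit, ?_, ?_⟩
  · rw [hkey]; exact hRT.mul hRunit
  · have hQ₂ : Q₂ = R⁻¹ := (Matrix.inv_eq_left_inv hI.symm).symm
    rw [hkey, hQ₂, Matrix.mul_inv_rev, Matrix.transpose_nonsing_inv]
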